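/- Let L(P,Q) = (1/2)‖Ȳ − PQᵀ‖_F² for P ∈ ℝ^{n×k}, Q ∈ ℝ^{m×k}, Ȳ ∈ ℝ^{n×m}. Then the squared Frobenius norm of the full gradient satisfies ‖∇L‖² = ‖(Ȳ − PQᵀ)Q‖_F² + ‖(Ȳ − PQᵀ)ᵀP‖_F² ≥ 2·L(P,Q)·(σ_min(P)² + σ_min(Q)²). -/
import Mathlib


open Matrix

/-- Squared Frobenius norm of a real matrix. -/
noncomputable def frobSq {p o : ℕ} (A : Matrix (Fin p) (Fin o) ℝ) : ℝ :=
  ∑ i, ∑ j, (A i j) ^ 2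

/-- Square of the smallest singular value of `B` (acting on row vectors `v ↦ v B`). -/
noncomputable def sminSq {o q : ℕ} (B : Matrix (Fin o) (Fin q) ℝ) : ℝ :=
  sInf {c : ℝ | ∃ v : Fin o → ℝ, (∑ i, (v i) ^ 2) = 1 ∧ c = ∑ j, (∑ i, v i * B i j) ^ 2}

lemma sminSq_bddBelow {o q : ℕ} (B : Matrix (Fin o) (Fin q) ℝ) :
    BddBelow {c : ℝ | ∃ v : Fin o → ℝ, (∑ i, (v i) ^ 2) = 1 ∧
      c = ∑ j, (∑ i, v i * B i j) ^ 2} := by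
  refine ⟨0, fun c hc => ?_⟩
  obtain ⟨v, _, rfl⟩ := hc
  exact Finset.sum_nonneg fun j _ => sq_nonneg _

lemma key {o q : ℕ} (B : Matrix (Fin o) (Fin q) ℝ) (v : Fin o → ℝ) :
    sminSq B * (∑ i, v i ^ 2) ≤ ∑ j, (∑ i, v i * B i j) ^ 2 := by
  have hS0 : 0 ≤ ∑ i, v i ^ 2 := Finset.sum_nonneg fun i _ => sq_nonneg _
  rcases eq_or_lt_of_le hS0 with h0 | hpos
  · rw [← h0, mul_zero]
    exact Finset.sum_nonneg fun j _ => sq_nonneg _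
  · set S := ∑ i, v i ^ 2 with hS
    have hs : (0:ℝ) < Real.sqrt S := Real.sqrt_pos.2 hpos
    have hsS : Real.sqrt S ^ 2 = S := Real.sq_sqrt hpos.le
    have hmem : (∑ j, (∑ i, v i * B i j) ^ 2) / S ∈
        {c : ℝ | ∃ w : Fin o → ℝ, (∑ i, (w i) ^ 2) = 1 ∧
          c = ∑ j, (∑ i, w i * B i j) ^ 2} := by
      refine ⟨fun i => v i / Real.sqrt S, ?_, ?_⟩
      · simp only [div_pow, hsS]
        rw [← Finset.sum_div, ← hS, div_self hpos.ne']
      · rw [Finset.sum_div]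
        refine Finset.sum_congr rfl fun j _ => ?_
        have h : (∑ i, v i / Real.sqrt S * B i j)
            = (∑ i, v i * B i j) / Real.sqrt S := by
          rw [Finset.sum_div]
          exact Finset.sum_congr rfl fun i _ => div_mul_eq_mul_div _ _ _
        rw [h, div_pow, hsS]
    have hle : sminSq B ≤ (∑ j, (∑ i, v i * B i j) ^ 2) / S :=
      csInf_le (sminSq_bddBelow B) hmem
    calc sminSq B * S ≤ ((∑ j, (∑ i, v i * B i j) ^ 2) / S) * S :=
          mul_le_mul_of_nonneg_right hle hpos.le
      _ = ∑ j, (∑ i, v i * B i j) ^ 2 := div_mul_cancel₀ _ hpos.ne'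

lemma frobSq_mul_ge {p o q : ℕ} (R : Matrix (Fin p) (Fin o) ℝ)
    (B : Matrix (Fin o) (Fin q) ℝ) :
    sminSq B * frobSq R ≤ frobSq (R * B) := by
  unfold frobSq
  rw [Finset.mul_sum]
  refine Finset.sum_le_sum fun i _ => ?_
  calc sminSq B * ∑ j, R i j ^ 2 ≤ ∑ j, (∑ l, R i l * B l j) ^ 2 := key B (R i)
    _ = ∑ j, ((R * B) i j) ^ 2 := by
        refine Finset.sum_congr rfl fun j _ => ?_
        rw [Matrix.mul_apply]

theorem stmt1 {n m k : ℕ} (Y : Matrix (Fin n) (Fin m) ℝ)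
    (P : Matrix (Fin n) (Fin k) ℝ) (Q : Matrix (Fin m) (Fin k) ℝ) :
    frobSq ((Y - P * Qᵀ) * Q) + frobSq ((Y - P * Qᵀ)ᵀ * P)
      ≥ 2 * ((1 : ℝ) / 2 * frobSq (Y - P * Qᵀ)) * (sminSq P + sminSq Q) := by
  set R := Y - P * Qᵀ with hR
  have hT : frobSq Rᵀ = frobSq R := by
    unfold frobSq
    rw [Finset.sum_comm]
    simp [Matrix.transpose_apply]
  have h1 : sminSq Q * frobSq R ≤ frobSq (R * Q) := frobSq_mul_ge R Q
  have h2 : sminSq P * frobSq R ≤ frobSq (Rᵀ * P) := by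
    have := frobSq_mul_ge Rᵀ P
    rwa [hT] at this
  have : 2 * ((1 : ℝ) / 2 * frobSq R) * (sminSq P + sminSq Q)
      = sminSq Q * frobSq R + sminSq P * frobSq R := by ring
  rw [this]
  exact add_le_add h1 h2
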